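/- Let G be a graph and f a real-valued function on subsets of vertices satisfying: (a) f(∅)=0; (b) monotonicity f(A) ≥ f(B) for A ⊇ B; (c) submodularity f(A)+f(B) ≥ f(A∪B)+f(A∩B); (e) strict submodularity f(A)+f(B) ≥ f(A∪B)+f(A∩B)+1 whenever A and B each contain an edge of G but A∩B is an independent set. Then for every subset X of vertices that induces a connected subgraph, ∑_{v∈X} f({v}) ≥ f(X) + |X| − 2. -/

import Mathlib

open scoped Classical

/-- A set of vertices is qualified if it contains both endpoints of an edge. -/
def Qualified {V : Type*} (G : SimpleGraph V) (A : Finset V) : Prop :=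
  ∃ u ∈ A, ∃ v ∈ A, G.Adj u v

lemma qualified_of_connected {V : Type*} (G : SimpleGraph V) (S : Finset V)
    (h : (G.induce (S : Set V)).Connected) (h2 : 2 ≤ S.card) : Qualified G S := by
  obtain ⟨a, ha, b, hb, hab⟩ := Finset.one_lt_card.mp h2
  obtain ⟨p⟩ := h.preconnected ⟨a, by simpa using ha⟩ ⟨b, by simpa using hb⟩
  cases p with
  | nil => exact absurd rfl hab
  | @cons _ c _ h' q =>
    exact ⟨a, ha, ↑c, by simpa using c.2, by simpa using h'⟩

lemma exists_boundary {V : Type*} (G : SimpleGraph V) (X S : Finset V)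
    {a b : (↑X : Set V)} (p : (G.induce (X : Set V)).Walk a b)
    (h1 : ↑a ∈ S) (h2 : ↑b ∉ S) : ∃ u ∈ S, ∃ v ∈ X, v ∉ S ∧ G.Adj u v := by
  induction p with
  | nil => exact absurd h1 h2
  | @cons x c _ h q ih =>
    by_cases hcS : ↑c ∈ S
    · exact ih hcS h2
    · exact ⟨↑x, h1, ↑c, by simpa using c.2, hcS, by simpa using h⟩

lemma extend_connected {V : Type*} (G : SimpleGraph V) (X S : Finset V)
    (hX : (G.induce (X : Set V)).Connected) (hSX : S ⊆ X)
    (hS : (G.induce (S : Set V)).Connected) (hne : S ≠ X) :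
    ∃ v ∈ X, v ∉ S ∧ (∃ u ∈ S, G.Adj u v) ∧
      (G.induce ((insert v S : Finset V) : Set V)).Connected := by
  obtain ⟨a, haS⟩ : S.Nonempty := by
    obtain ⟨⟨a, haS⟩⟩ := hS.nonempty
    exact ⟨a, by simpa using haS⟩
  obtain ⟨b, hbX, hbS⟩ : ∃ b ∈ X, b ∉ S := by
    by_contra hcon
    push_neg at hcon
    exact hne (Finset.Subset.antisymm hSX hcon)
  obtain ⟨p⟩ := hX.preconnected ⟨a, by simpa using hSX haS⟩ ⟨b, by simpa using hbX⟩
  obtain ⟨u, huS, v, hvX, hvS, huv⟩ := exists_boundary G X S p haS hbS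
  refine ⟨v, hvX, hvS, ⟨u, huS, huv⟩, ?_⟩
  have hpair : (G.induce ({u, v} : Set V)).Connected := G.induce_pair_connected_of_adj huv
  have hun : (G.induce ((S : Set V) ∪ {u, v})).Connected :=
    SimpleGraph.induce_union_connected hS.preconnected hpair.preconnected ⟨u, by simp [huS]⟩
  have hset : ((insert v S : Finset V) : Set V) = (S : Set V) ∪ {u, v} := by
    ext x
    simp only [Finset.coe_insert, Set.mem_insert_iff, Finset.mem_coe, Set.mem_union,
      Set.mem_insert_iff, Set.mem_singleton_iff]
    constructor
    · rintro (rfl | hx)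
      · exact Or.inr (Or.inr rfl)
      · exact Or.inl hx
    · rintro (hx | rfl | rfl)
      · exact Or.inr hx
      · exact Or.inr huS
      · exact Or.inl rfl
  rw [hset]
  exact hun

/-- entropy-method inequality for connected induced subsets. -/
theorem sum_singletons_ge_connected {V : Type*} (G : SimpleGraph V)
    (f : Finset V → ℝ)
    (ha : f ∅ = 0)
    (hb : ∀ A B : Finset V, B ⊆ A → f B ≤ f A)
    (hc : ∀ A B : Finset V, f (A ∪ B) + f (A ∩ B) ≤ f A + f B)
    (he : ∀ A B : Finset V, Qualified G A → Qualified G B → ¬ Qualified G (A ∩ B) →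
      f (A ∪ B) + f (A ∩ B) + 1 ≤ f A + f B)
    (X : Finset V) (hX : (G.induce (X : Set V)).Connected) (hcard : 2 ≤ X.card) :
    f X + (X.card : ℝ) - 2 ≤ ∑ v ∈ X, f {v} := by
  -- grow a connected subset of each cardinality k, 2 ≤ k ≤ X.card, satisfying the inequality
  have key : ∀ k : ℕ, 2 ≤ k → k ≤ X.card → ∃ S : Finset V, S ⊆ X ∧ S.card = k ∧
      (G.induce (S : Set V)).Connected ∧ f S + (k : ℝ) - 2 ≤ ∑ v ∈ S, f {v} := by
    intro k
    induction k with
    | zero => omega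
    | succ k ih =>
      intro h2 hk
      rcases Nat.lt_or_ge k 2 with hk2 | hk2
      · -- base case: k + 1 = 2
        have hk1 : k = 1 := by omega
        subst hk1
        obtain ⟨u, huX, v, hvX, huv⟩ := qualified_of_connected G X hX hcard
        have hne : u ≠ v := G.ne_of_adj huv
        refine ⟨{u, v}, ?_, ?_, ?_, ?_⟩
        · intro x hx
          rcases Finset.mem_insert.mp hx with rfl | hx
          · exact huX
          · rw [Finset.mem_singleton.mp hx]; exact hvX
        · rw [Finset.card_insert_of_notMem (by simp [hne]), Finset.card_singleton]
        · have := G.induce_pair_connected_of_adj huv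
          have hset : (({u, v} : Finset V) : Set V) = ({u, v} : Set V) := by simp
          rw [hset]; exact this
        · rw [Finset.sum_pair hne]
          have h1 := hc {u} {v}
          have h2 : ({u} : Finset V) ∪ {v} = {u, v} := by
            ext x; simp [Finset.mem_insert]
          have h3 : ({u} : Finset V) ∩ {v} = ∅ := by
            ext x; simp only [Finset.mem_inter, Finset.mem_singleton, Finset.notMem_empty,
              iff_false, not_and]; rintro rfl; exact hne
          rw [h2, h3, ha] at h1
          push_cast
          linarith
      · -- inductive step
        obtain ⟨S, hSX, hScard, hSconn, hSineq⟩ := ih hk2 (le_of_lt hk)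
        have hSneX : S ≠ X := by
          intro h; rw [h] at hScard; omega
        obtain ⟨v, hvX, hvS, ⟨u, huS, huv⟩, hconn'⟩ :=
          extend_connected G X S hX hSX hSconn hSneX
        refine ⟨insert v S, ?_, ?_, hconn', ?_⟩
        · exact Finset.insert_subset hvX hSX
        · rw [Finset.card_insert_of_notMem hvS, hScard]
        · have hne : u ≠ v := G.ne_of_adj huv
          have hQS : Qualified G S := qualified_of_connected G S hSconn (by omega)
          have hQp : Qualified G {u, v} := ⟨u, by simp, v, by simp, huv⟩
          have hint : S ∩ ({u, v} : Finset V) = {u} := by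
            ext x
            simp only [Finset.mem_inter, Finset.mem_insert, Finset.mem_singleton]
            constructor
            · rintro ⟨hxS, rfl | rfl⟩
              · rfl
              · exact absurd hxS hvS
            · rintro rfl; exact ⟨huS, Or.inl rfl⟩
          have hnQ : ¬ Qualified G (S ∩ {u, v}) := by
            rw [hint]
            rintro ⟨x, hx, y, hy, hxy⟩
            rw [Finset.mem_singleton] at hx hy
            subst hx; subst hy
            exact G.irrefl hxy
          have h1 := he S {u, v} hQS hQp hnQ
          rw [hint] at h1
          have hun : S ∪ ({u, v} : Finset V) = insert v S := by
            ext x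
            simp only [Finset.mem_union, Finset.mem_insert, Finset.mem_singleton]
            constructor
            · rintro (hx | rfl | rfl)
              · exact Or.inr hx
              · exact Or.inr huS
              · exact Or.inl rfl
            · rintro (rfl | hx)
              · exact Or.inr (Or.inr rfl)
              · exact Or.inl hx
          rw [hun] at h1
          -- f {u,v} ≤ f {u} + f {v}
          have h2 := hc {u} {v}
          have hu2 : ({u} : Finset V) ∪ {v} = {u, v} := by
            ext x; simp
          have hi2 : ({u} : Finset V) ∩ {v} = ∅ := by
            ext x; simp only [Finset.mem_inter, Finset.mem_singleton, Finset.notMem_empty,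
              iff_false, not_and]; rintro rfl; exact hne
          rw [hu2, hi2, ha] at h2
          have hsum : ∑ w ∈ insert v S, f {w} = f {v} + ∑ w ∈ S, f {w} :=
            Finset.sum_insert hvS
          rw [hsum]
          push_cast
          linarith
  obtain ⟨S, hSX, hScard, _, hineq⟩ := key X.card hcard le_rfl
  have : S = X := Finset.eq_of_subset_of_card_le hSX (le_of_eq hScard.symm)
  subst this
  exact by linarith [hineq]
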